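/- Let T > 0 and c > 0, and define the limiting EgReg risk function r(λ) = c² λ² m'(−λ) + T γ (m(−λ) − λ m'(−λ)) for λ > 0. If 0 < γ < 1, then lim_{λ→0+} r(λ) = T γ / (1 − γ); if γ > 1, then lim_{λ→0+} r(λ) = c² (1 − 1/γ) + T / (γ − 1). -/

import Mathlib

open Filter Topology

/-- The Stieltjes transform of the Marchenko–Pastur law with ratio `γ`,
defined for `z < 0` by `m(z) = (1 − γ − z − √((1 − γ − z)² − 4γz)) / (2γz)`. -/
noncomputable def mMP (γ z : ℝ) : ℝ :=
  (1 - γ - z - Real.sqrt ((1 - γ - z) ^ 2 - 4 * γ * z)) / (2 * γ * z)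

/-- The limiting EgReg risk function
`r(λ) = c² λ² m'(−λ) + T γ (m(−λ) − λ m'(−λ))` for `λ > 0`. -/
noncomputable def limRisk (γ T c lam : ℝ) : ℝ :=
  c ^ 2 * lam ^ 2 * deriv (mMP γ) (-lam) +
    T * γ * (mMP γ (-lam) - lam * deriv (mMP γ) (-lam))

section aux

variable {γ z : ℝ}

lemma delta_pos (hγ : 0 < γ) (hz : z < 0) : 0 < (1 - γ - z) ^ 2 - 4 * γ * z := by
  nlinarith [sq_nonneg (1 - γ - z), mul_pos hγ (neg_pos.2 hz)]

lemma sum_pos (hγ : 0 < γ) (hz : z < 0) :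
    0 < (1 - γ - z) + Real.sqrt ((1 - γ - z) ^ 2 - 4 * γ * z) := by
  have hΔ := delta_pos hγ hz
  have hs : Real.sqrt ((1 - γ - z) ^ 2 - 4 * γ * z) ^ 2 = (1 - γ - z) ^ 2 - 4 * γ * z :=
    Real.sq_sqrt hΔ.le
  have hspos : 0 < Real.sqrt ((1 - γ - z) ^ 2 - 4 * γ * z) := Real.sqrt_pos.2 hΔ
  nlinarith [mul_pos hγ (neg_pos.2 hz)]

lemma mMP_eq (hγ : 0 < γ) (hz : z < 0) :
    mMP γ z = 2 / ((1 - γ - z) + Real.sqrt ((1 - γ - z) ^ 2 - 4 * γ * z)) := by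
  have hΔ := delta_pos hγ hz
  have hs : Real.sqrt ((1 - γ - z) ^ 2 - 4 * γ * z) ^ 2 = (1 - γ - z) ^ 2 - 4 * γ * z :=
    Real.sq_sqrt hΔ.le
  have hsum := sum_pos hγ hz
  have hz' : 2 * γ * z ≠ 0 := by
    have : γ * z < 0 := mul_neg_of_pos_of_neg hγ hz
    intro h; nlinarith
  rw [mMP, div_eq_div_iff hz' (ne_of_gt hsum)]
  nlinarith [hs]

lemma mMP_hasDeriv (hγ : 0 < γ) (hz : z < 0) :
    HasDerivAt (mMP γ)
      (2 * (Real.sqrt ((1 - γ - z) ^ 2 - 4 * γ * z) + (1 - γ - z) + 2 * γ) /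
        (Real.sqrt ((1 - γ - z) ^ 2 - 4 * γ * z) *
          ((1 - γ - z) + Real.sqrt ((1 - γ - z) ^ 2 - 4 * γ * z)) ^ 2)) z := by
  have hΔ := delta_pos hγ hz
  have hspos : 0 < Real.sqrt ((1 - γ - z) ^ 2 - 4 * γ * z) := Real.sqrt_pos.2 hΔ
  have hsum := sum_pos hγ hz
  set s := Real.sqrt ((1 - γ - z) ^ 2 - 4 * γ * z) with hs_def
  have hf : HasDerivAt (fun z : ℝ => 1 - γ - z) (-1) z := by
    simpa using ((hasDerivAt_id z).const_sub (1 - γ))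
  have hΔ' : HasDerivAt (fun z : ℝ => (1 - γ - z) ^ 2 - 4 * γ * z)
      (2 * (1 - γ - z) ^ 1 * (-1) - 4 * γ) z := by
    have h1 := hf.pow 2
    have h2 : HasDerivAt (fun z : ℝ => 4 * γ * z) (4 * γ) z := by
      simpa using (hasDerivAt_id z).const_mul (4 * γ)
    exact h1.sub h2
  have hsqrt : HasDerivAt (fun z : ℝ => Real.sqrt ((1 - γ - z) ^ 2 - 4 * γ * z))
      (1 / (2 * s) * (2 * (1 - γ - z) ^ 1 * (-1) - 4 * γ)) z :=
    (Real.hasDerivAt_sqrt (ne_of_gt hΔ)).comp z hΔ'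
  have hden : HasDerivAt (fun z : ℝ => (1 - γ - z) + Real.sqrt ((1 - γ - z) ^ 2 - 4 * γ * z))
      (-1 + 1 / (2 * s) * (2 * (1 - γ - z) ^ 1 * (-1) - 4 * γ)) z := hf.add hsqrt
  have hg : HasDerivAt (fun z : ℝ => 2 / ((1 - γ - z) + Real.sqrt ((1 - γ - z) ^ 2 - 4 * γ * z)))
      ((0 * ((1 - γ - z) + s) - 2 * (-1 + 1 / (2 * s) * (2 * (1 - γ - z) ^ 1 * (-1) - 4 * γ))) /
        ((1 - γ - z) + s) ^ 2) z :=
    (hasDerivAt_const z 2).div hden (ne_of_gt hsum)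
  have hval : (0 * ((1 - γ - z) + s) - 2 * (-1 + 1 / (2 * s) * (2 * (1 - γ - z) ^ 1 * (-1) - 4 * γ))) /
        ((1 - γ - z) + s) ^ 2 = 2 * (s + (1 - γ - z) + 2 * γ) / (s * ((1 - γ - z) + s) ^ 2) := by
    field_simp
    ring
  rw [hval] at hg
  refine hg.congr_of_eventuallyEq ?_
  filter_upwards [Iio_mem_nhds hz] with w hw
  exact mMP_eq hγ hw

end aux

section alg

lemma alg1 (γ lam s f : ℝ) (hγ : 0 < γ) (hspos : 0 < s)
    (hsum : 0 < f + s) (hu4 : (s - f) * (s + f) = 4 * γ * lam) :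
    lam ^ 2 * (2 * (s + f + 2 * γ) / (s * (f + s) ^ 2)) =
      (2 * lam + (s - f)) * (s - f) / (4 * γ * s) := by
  rw [mul_div_assoc', div_eq_div_iff (mul_pos hspos (pow_pos hsum 2)).ne'
    (mul_pos (mul_pos (by norm_num) hγ) hspos).ne']
  linear_combination (-(2 * s * lam * (s + f + 2 * γ) + s * (s - f) * (s + f))) * hu4

lemma alg2 (γ lam s f : ℝ) (hγ : 0 < γ) (hspos : 0 < s)
    (hsum : 0 < f + s) (hu4 : (s - f) * (s + f) = 4 * γ * lam) :
    2 / (f + s) - lam * (2 * (s + f + 2 * γ) / (s * (f + s) ^ 2)) =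
      (2 * γ - (s - f)) / (2 * γ * s) := by
  rw [mul_div_assoc', div_sub_div _ _ hsum.ne' (mul_pos hspos (pow_pos hsum 2)).ne',
    div_eq_div_iff (mul_ne_zero hsum.ne' (mul_pos hspos (pow_pos hsum 2)).ne')
    (mul_pos (mul_pos (by norm_num) hγ) hspos).ne']
  linear_combination (s * (s + f) * (s + f + 2 * γ)) * hu4

end alg

/-- Closed form for `limRisk` in terms of `s = √((1-γ+λ)²+4γλ)`. -/
lemma limRisk_eq (γ T c lam : ℝ) (hγ : 0 < γ) (hl : 0 < lam) :
    limRisk γ T c lam =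
      c ^ 2 * ((2 * lam + (Real.sqrt ((1 - γ + lam) ^ 2 + 4 * γ * lam) - (1 - γ + lam))) *
          (Real.sqrt ((1 - γ + lam) ^ 2 + 4 * γ * lam) - (1 - γ + lam)) /
          (4 * γ * Real.sqrt ((1 - γ + lam) ^ 2 + 4 * γ * lam))) +
        T * γ * ((2 * γ - (Real.sqrt ((1 - γ + lam) ^ 2 + 4 * γ * lam) - (1 - γ + lam))) /
          (2 * γ * Real.sqrt ((1 - γ + lam) ^ 2 + 4 * γ * lam))) := by
  have hz : (-lam : ℝ) < 0 := neg_neg_iff_pos.2 hl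
  have hd := (mMP_hasDeriv hγ hz).deriv
  have hm := mMP_eq hγ hz
  have e2 : (1 - γ - -lam) ^ 2 - 4 * γ * -lam = (1 - γ + lam) ^ 2 + 4 * γ * lam := by ring
  have e1 : 1 - γ - -lam = 1 - γ + lam := by ring
  rw [e2, e1] at hd hm
  set s := Real.sqrt ((1 - γ + lam) ^ 2 + 4 * γ * lam) with hs_def
  set f := 1 - γ + lam with hf_def
  have hΔpos : 0 < (1 - γ + lam) ^ 2 + 4 * γ * lam := by positivity
  have hspos : 0 < s := Real.sqrt_pos.2 hΔpos
  have hs2 : s ^ 2 = (1 - γ + lam) ^ 2 + 4 * γ * lam := Real.sq_sqrt hΔpos.le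
  have hsum : 0 < f + s := by
    have := sum_pos hγ hz
    rw [e2, e1] at this
    linarith [this]
  have hu4 : (s - f) * (s + f) = 4 * γ * lam := by
    rw [hf_def]; linear_combination hs2
  rw [limRisk, hd, hm, mul_assoc (c ^ 2),
    alg1 γ lam s f hγ hspos hsum hu4, alg2 γ lam s f hγ hspos hsum hu4]

theorem limit_of_limRisk_at_zero (γ T c : ℝ) (hT : 0 < T) (hc : 0 < c) :
    (0 < γ → γ < 1 →
      Tendsto (fun lam => limRisk γ T c lam) (𝓝[>] 0) (𝓝 (T * γ / (1 - γ)))) ∧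
    (1 < γ →
      Tendsto (fun lam => limRisk γ T c lam) (𝓝[>] 0)
        (𝓝 (c ^ 2 * (1 - 1 / γ) + T / (γ - 1)))) := by
  have main : ∀ γ : ℝ, 0 < γ → γ ≠ 1 →
      Tendsto (fun lam => limRisk γ T c lam) (𝓝[>] 0)
        (𝓝 (c ^ 2 * ((2 * 0 + (Real.sqrt ((1 - γ + 0) ^ 2 + 4 * γ * 0) - (1 - γ + 0))) *
          (Real.sqrt ((1 - γ + 0) ^ 2 + 4 * γ * 0) - (1 - γ + 0)) /
          (4 * γ * Real.sqrt ((1 - γ + 0) ^ 2 + 4 * γ * 0))) +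
        T * γ * ((2 * γ - (Real.sqrt ((1 - γ + 0) ^ 2 + 4 * γ * 0) - (1 - γ + 0))) /
          (2 * γ * Real.sqrt ((1 - γ + 0) ^ 2 + 4 * γ * 0))))) := by
    intro γ hγ hγ1
    have hS0pos : 0 < Real.sqrt ((1 - γ + 0) ^ 2 + 4 * γ * 0) := by
      apply Real.sqrt_pos.2
      have h1 : (1 : ℝ) - γ ≠ 0 := fun h => hγ1 (by linarith)
      have : 0 < (1 - γ) ^ 2 := by positivity
      nlinarith
    have hG : ContinuousAt (fun l : ℝ =>
        c ^ 2 * ((2 * l + (Real.sqrt ((1 - γ + l) ^ 2 + 4 * γ * l) - (1 - γ + l))) *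
          (Real.sqrt ((1 - γ + l) ^ 2 + 4 * γ * l) - (1 - γ + l)) /
          (4 * γ * Real.sqrt ((1 - γ + l) ^ 2 + 4 * γ * l))) +
        T * γ * ((2 * γ - (Real.sqrt ((1 - γ + l) ^ 2 + 4 * γ * l) - (1 - γ + l))) /
          (2 * γ * Real.sqrt ((1 - γ + l) ^ 2 + 4 * γ * l)))) 0 := by
      have hroot : ContinuousAt (fun l : ℝ => Real.sqrt ((1 - γ + l) ^ 2 + 4 * γ * l)) 0 :=
        (Real.continuous_sqrt.comp (by continuity)).continuousAt
      have hne1 : 4 * γ * Real.sqrt ((1 - γ + (0:ℝ)) ^ 2 + 4 * γ * 0) ≠ 0 := by positivity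
      have hne2 : 2 * γ * Real.sqrt ((1 - γ + (0:ℝ)) ^ 2 + 4 * γ * 0) ≠ 0 := by positivity
      apply ContinuousAt.add
      · exact continuousAt_const.mul (ContinuousAt.div (by fun_prop) (by fun_prop) hne1)
      · exact continuousAt_const.mul (ContinuousAt.div (by fun_prop) (by fun_prop) hne2)
    have htend := hG.tendsto.mono_left (nhdsWithin_le_nhds (s := Set.Ioi (0:ℝ)))
    refine htend.congr' ?_
    filter_upwards [self_mem_nhdsWithin] with l hl
    exact (limRisk_eq γ T c l hγ hl).symm
  constructor
  · intro hγ hγ1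
    have h := main γ hγ (by linarith)
    have hS0 : Real.sqrt ((1 - γ + 0) ^ 2 + 4 * γ * 0) = 1 - γ := by
      rw [show (1 - γ + (0:ℝ)) ^ 2 + 4 * γ * 0 = (1 - γ) ^ 2 by ring,
        Real.sqrt_sq (by linarith)]
    rw [hS0] at h
    convert h using 2
    have h1γ : (1 : ℝ) - γ ≠ 0 := by linarith
    field_simp
    ring
  · intro hγ1
    have hγ : 0 < γ := by linarith
    have h := main γ hγ (by linarith)
    have hS0 : Real.sqrt ((1 - γ + 0) ^ 2 + 4 * γ * 0) = γ - 1 := by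
      rw [show (1 - γ + (0:ℝ)) ^ 2 + 4 * γ * 0 = (γ - 1) ^ 2 by ring,
        Real.sqrt_sq (by linarith)]
    rw [hS0] at h
    convert h using 2
    have h1γ : γ - 1 ≠ 0 := by linarith
    have hγ0 : γ ≠ 0 := by linarith
    field_simp
    ring
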